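/- Let q be an odd prime power and χ a primitive Dirichlet character of 𝔽_q[T] modulo a monic h with deg h ≥ 1. Define G(χ) := Σ_{a mod h} χ(a)·e_q(a/h) and τ(χ) := Σ_{c ∈ 𝔽_q^×} χ(c)·exp(2πi·Tr_{𝔽_q/𝔽_p}(c)/p) (χ evaluated at the constant polynomials c). If χ is odd, then G(χ) = τ(χ) · Σ_{f ∈ M_{q,deg h−1}} χ(f); if χ is even, then G(χ) = −q · Σ_{f ∈ M_{q,deg h−1}} χ(f). -/

import Mathlib

open scoped Classical
open Polynomial

namespace CubicLF

lemma finite_degreeLT (Fq : Type) [Field Fq] [Fintype Fq] (n : ℕ) :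
    {f : Polynomial Fq | f.degree < (n : ℕ)}.Finite := by
  haveI : Finite (Polynomial.degreeLT Fq n) :=
    Finite.of_equiv _ (Polynomial.degreeLTEquiv Fq n).toEquiv.symm
  have h1 : {f : Polynomial Fq | f.degree < (n : ℕ)} =
      (Polynomial.degreeLT Fq n : Set (Polynomial Fq)) := by
    ext f
    simp [Polynomial.mem_degreeLT]
  rw [h1]
  exact Set.toFinite _

/-- The residues modulo `h`: all polynomials of degree smaller than `deg h`. -/
noncomputable def residues (Fq : Type) [Field Fq] [Fintype Fq] (h : Polynomial Fq) :
    Finset (Polynomial Fq) :=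
  (finite_degreeLT Fq h.natDegree).toFinset

lemma finite_monicDeg (Fq : Type) [Field Fq] [Fintype Fq] (n : ℕ) :
    {f : Polynomial Fq | f.Monic ∧ f.natDegree = n}.Finite := by
  apply (finite_degreeLT Fq (n + 1)).subset
  rintro f ⟨hm, rfl⟩
  simp only [Set.mem_setOf_eq]
  rw [Polynomial.degree_eq_natDegree hm.ne_zero]
  exact_mod_cast Nat.lt_succ_self _

/-- The monic polynomials of degree `n`, as a finite set. -/
noncomputable def Mdeg (Fq : Type) [Field Fq] [Fintype Fq] (n : ℕ) : Finset (Polynomial Fq) :=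
  (finite_monicDeg Fq n).toFinset

lemma finite_monicDegLE (Fq : Type) [Field Fq] [Fintype Fq] (n : ℕ) :
    {f : Polynomial Fq | f.Monic ∧ f.natDegree ≤ n}.Finite := by
  apply (finite_degreeLT Fq (n + 1)).subset
  rintro f ⟨hm, hle⟩
  simp only [Set.mem_setOf_eq]
  rw [Polynomial.degree_eq_natDegree hm.ne_zero]
  exact_mod_cast Nat.lt_succ_of_le hle

/-- The monic polynomials of degree at most `n`, as a finite set. -/
noncomputable def MdegLE (Fq : Type) [Field Fq] [Fintype Fq] (n : ℕ) : Finset (Polynomial Fq) :=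
  (finite_monicDegLE Fq n).toFinset

/-- The monic polynomials of degree `k` for an integer `k` (empty for `k < 0`). -/
noncomputable def MdegZ (Fq : Type) [Field Fq] [Fintype Fq] (k : ℤ) : Finset (Polynomial Fq) :=
  if 0 ≤ k then Mdeg Fq k.toNat else ∅

/-- The monic polynomials of degree at most `k`, for an integer `k` (empty for `k < 0`). -/
noncomputable def MdegLEZ (Fq : Type) [Field Fq] [Fintype Fq] (k : ℤ) : Finset (Polynomial Fq) :=
  if 0 ≤ k then MdegLE Fq k.toNat else ∅

lemma finite_sqfMonicDeg (Fq : Type) [Field Fq] [Fintype Fq] (n : ℕ) :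
    {f : Polynomial Fq | f.Monic ∧ Squarefree f ∧ f.natDegree = n}.Finite :=
  (finite_monicDeg Fq n).subset (by rintro f ⟨h1, _, h3⟩; exact ⟨h1, h3⟩)

/-- The monic squarefree polynomials of degree `n`, as a finite set. -/
noncomputable def Hdeg (Fq : Type) [Field Fq] [Fintype Fq] (n : ℕ) : Finset (Polynomial Fq) :=
  (finite_sqfMonicDeg Fq n).toFinset

lemma finite_primeDiv (Fq : Type) [Field Fq] [Fintype Fq] (f : Polynomial Fq) (hf : f ≠ 0) :
    {P : Polynomial Fq | P.Monic ∧ Irreducible P ∧ P ∣ f}.Finite := by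
  apply (finite_monicDegLE Fq f.natDegree).subset
  rintro P ⟨h1, _, h3⟩
  exact ⟨h1, Polynomial.natDegree_le_of_dvd h3 hf⟩

/-- The monic irreducible divisors of `f`, as a finite set. -/
noncomputable def primeDiv (Fq : Type) [Field Fq] [Fintype Fq] (f : Polynomial Fq) :
    Finset (Polynomial Fq) :=
  if hf : f = 0 then ∅ else (finite_primeDiv Fq f hf).toFinset

lemma finite_monicDvd (Fq : Type) [Field Fq] [Fintype Fq] (f : Polynomial Fq) (hf : f ≠ 0) :
    {a : Polynomial Fq | a.Monic ∧ a ∣ f}.Finite := by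
  apply (finite_monicDegLE Fq f.natDegree).subset
  rintro a ⟨h1, h2⟩
  exact ⟨h1, Polynomial.natDegree_le_of_dvd h2 hf⟩

/-- The monic divisors of `f`, as a finite set. -/
noncomputable def monicDvd (Fq : Type) [Field Fq] [Fintype Fq] (f : Polynomial Fq) :
    Finset (Polynomial Fq) :=
  if hf : f = 0 then ∅ else (finite_monicDvd Fq f hf).toFinset

/-- The Möbius function of 𝔽_q[T]. -/
noncomputable def muP (Fq : Type) [Field Fq] [Fintype Fq] (f : Polynomial Fq) : ℤ :=
  if Squarefree f then (-1) ^ (primeDiv Fq f).card else 0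

/-- The Euler phi function of 𝔽_q[T]. -/
noncomputable def phiPoly (Fq : Type) [Field Fq] (f : Polynomial Fq) : ℕ :=
  Nat.card ((Polynomial Fq ⧸ Ideal.span {f})ˣ)

/-- The monic gcd of two polynomials. -/
noncomputable def mgcd (Fq : Type) [Field Fq] (a b : Polynomial Fq) : Polynomial Fq :=
  Polynomial.C ((EuclideanDomain.gcd a b).leadingCoeff)⁻¹ * EuclideanDomain.gcd a b

/-- A Dirichlet character of 𝔽_q[T]: a homomorphism `(𝔽_q[T]/(m))^× → ℂ^×` extended to
`𝔽_q[T]` by periodicity on elements coprime to `m` and by `0` on the others. -/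
structure DChar (Fq : Type) [Field Fq] where
  modulus : Polynomial Fq
  monic_modulus : modulus.Monic
  toFun : Polynomial Fq → ℂ
  map_one : toFun 1 = 1
  map_mul : ∀ a b : Polynomial Fq, toFun (a * b) = toFun a * toFun b
  periodic : ∀ a b : Polynomial Fq, modulus ∣ a - b → toFun a = toFun b
  eq_zero_iff : ∀ a : Polynomial Fq, toFun a = 0 ↔ ¬ IsCoprime a modulus

/-- `h` is a (monic) period of the Dirichlet character `χ`. -/
def IsPeriod {Fq : Type} [Field Fq] (χ : DChar Fq) (h : Polynomial Fq) : Prop :=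
  h.Monic ∧ ∀ a b : Polynomial Fq, IsCoprime a χ.modulus → IsCoprime b χ.modulus →
    h ∣ a - b → χ.toFun a = χ.toFun b

/-- A Dirichlet character is primitive when its conductor (the monic period of smallest
degree) is its modulus. -/
def IsPrimitiveChar {Fq : Type} [Field Fq] (χ : DChar Fq) : Prop :=
  ∀ h : Polynomial Fq, IsPeriod χ h → χ.modulus.natDegree ≤ h.natDegree

/-- A Dirichlet character is cubic when `χ³` is principal but `χ` is not. -/
def IsCubicChar {Fq : Type} [Field Fq] (χ : DChar Fq) : Prop :=
  (∀ a : Polynomial Fq, IsCoprime a χ.modulus → χ.toFun a ^ 3 = 1) ∧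
    ¬ ∀ a : Polynomial Fq, IsCoprime a χ.modulus → χ.toFun a = 1

/-- A Dirichlet character is even when it is trivial on the constants 𝔽_q^×. -/
def IsEvenChar {Fq : Type} [Field Fq] (χ : DChar Fq) : Prop :=
  ∀ c : Fq, c ≠ 0 → χ.toFun (Polynomial.C c) = 1

/-- A Dirichlet character is odd when it is not even. -/
def IsOddChar {Fq : Type} [Field Fq] (χ : DChar Fq) : Prop := ¬ IsEvenChar χ

/-- The genus of a Dirichlet character of conductor `h`:  `deg h - 2` if even,
`deg h - 1` if odd. -/
noncomputable def genus {Fq : Type} [Field Fq] (χ : DChar Fq) : ℕ :=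
  if IsEvenChar χ then χ.modulus.natDegree - 2 else χ.modulus.natDegree - 1

/-- The central value `L_q(1/2,χ) = Σ_{f ∈ M_{q, ≤ deg h - 1}} χ(f) q^{-deg f/2}`. -/
noncomputable def Lhalf (Fq : Type) [Field Fq] [Fintype Fq] (χ : DChar Fq) : ℂ :=
  ∑ f ∈ MdegLE Fq (χ.modulus.natDegree - 1),
    χ.toFun f / (Real.sqrt (Fintype.card Fq : ℝ) : ℂ) ^ f.natDegree

/-- The zeta function `ζ_q(s) = (1 - q^{1-s})⁻¹`. -/
noncomputable def zetaQ (Fq : Type) [Fintype Fq] (s : ℝ) : ℝ :=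
  (1 - (Fintype.card Fq : ℝ) ^ ((1 : ℝ) - s))⁻¹

/-- The primitive cube root of unity `e^{2πi/3}` in ℂ. -/
noncomputable def omega3 : ℂ := Complex.exp (2 * Real.pi * Complex.I / 3)

/-- The cubic character `χ₃` of 𝔽_q^×, relative to the choice `ζ = Ω(e^{2πi/3})` of a
primitive cube root of unity of 𝔽_q:  `χ₃(α) = Ω⁻¹(α^{(q-1)/3})`. -/
noncomputable def chi3 (Fq : Type) [Field Fq] [Fintype Fq] (ζ : Fq) (α : Fq) : ℂ :=
  if α ^ ((Fintype.card Fq - 1) / 3) = 1 then 1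
  else if α ^ ((Fintype.card Fq - 1) / 3) = ζ then omega3
  else omega3 ^ 2

/-- The cubic residue symbol `χ_P` for `P` a monic irreducible polynomial, relative to the
choice `ζ = Ω(e^{2πi/3})` of a primitive cube root of unity of 𝔽_q. -/
noncomputable def cubicSymP (Fq : Type) [Field Fq] [Fintype Fq] (ζ : Fq) (P a : Polynomial Fq) :
    ℂ :=
  if P ∣ a then 0
  else if P ∣ (a ^ ((Fintype.card Fq ^ P.natDegree - 1) / 3) - 1) then 1
  else if P ∣ (a ^ ((Fintype.card Fq ^ P.natDegree - 1) / 3) - Polynomial.C ζ) then omega3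
  else omega3 ^ 2

/-- The cubic residue symbol `χ_F = Π χ_{P_i}^{e_i}` for `F = Π P_i^{e_i}` monic. -/
noncomputable def cubicSym (Fq : Type) [Field Fq] [Fintype Fq] (ζ : Fq) (F a : Polynomial Fq) :
    ℂ :=
  ((UniqueFactorizationMonoid.normalizedFactors F).map (fun P => cubicSymP Fq ζ P a)).prod

/-- The standard additive character `x ↦ exp(2πi Tr_{𝔽_q/𝔽_p}(x)/p)` of 𝔽_q. -/
noncomputable def stdChar (Fq : Type) [Field Fq] [Fintype Fq] (p : ℕ) [Algebra (ZMod p) Fq]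
    (x : Fq) : ℂ :=
  Complex.exp (2 * Real.pi * Complex.I * ((Algebra.trace (ZMod p) Fq x).val : ℂ) / p)

/-- `e_q(g/h)`, i.e. the standard additive character evaluated at the coefficient of `T⁻¹`
in the expansion of `g/h` in `𝔽_q((1/T))`; this coefficient equals the coefficient of
`T^{deg h - 1}` in `g mod h`. -/
noncomputable def eqF (Fq : Type) [Field Fq] [Fintype Fq] (p : ℕ) [Algebra (ZMod p) Fq]
    (g h : Polynomial Fq) : ℂ :=
  stdChar Fq p ((g %ₘ h).coeff (h.natDegree - 1))

/-- The generalized cubic Gauss sum `G_q(V,f) = Σ_{u mod f} χ_f(u) e_q(uV/f)`. -/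
noncomputable def Gq (Fq : Type) [Field Fq] [Fintype Fq] (ζ : Fq) (p : ℕ) [Algebra (ZMod p) Fq]
    (V f : Polynomial Fq) : ℂ :=
  ∑ u ∈ residues Fq f, cubicSym Fq ζ f u * eqF Fq p (u * V) f

/-- The Gauss sum `G(χ) = Σ_{a mod h} χ(a) e_q(a/h)` of a Dirichlet character of modulus `h`. -/
noncomputable def bigGauss (Fq : Type) [Field Fq] [Fintype Fq] (p : ℕ) [Algebra (ZMod p) Fq]
    (χ : DChar Fq) : ℂ :=
  ∑ a ∈ residues Fq χ.modulus, χ.toFun a * eqF Fq p a χ.modulus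

/-- `τ(χ) = Σ_{c ∈ 𝔽_q^×} χ(c) exp(2πi Tr(c)/p)`, the Gauss sum of the restriction of a
Dirichlet character to the constants. -/
noncomputable def tauD (Fq : Type) [Field Fq] [Fintype Fq] (p : ℕ) [Algebra (ZMod p) Fq]
    (χ : DChar Fq) : ℂ :=
  ∑ c : Fqˣ, χ.toFun (Polynomial.C (c : Fq)) * stdChar Fq p (c : Fq)

/-- `τ(χ₃) = Σ_{c ∈ 𝔽_q^×} χ₃(c) exp(2πi Tr(c)/p)`. -/
noncomputable def tauChi3 (Fq : Type) [Field Fq] [Fintype Fq] (ζ : Fq) (p : ℕ)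
    [Algebra (ZMod p) Fq] : ℂ :=
  ∑ c : Fqˣ, chi3 Fq ζ (c : Fq) * stdChar Fq p (c : Fq)

/-- The generating series `Ψ_q(f,X) = Σ_{F monic} G_q(f,F) X^{deg F}` as a formal power
series. -/
noncomputable def PsiS (Fq : Type) [Field Fq] [Fintype Fq] (ζ : Fq) (p : ℕ)
    [Algebra (ZMod p) Fq] (f : Polynomial Fq) : PowerSeries ℂ :=
  PowerSeries.mk fun n => ∑ F ∈ Mdeg Fq n, Gq Fq ζ p f F

/-- The generating series `Ψ̃_q(f,X) = Σ_{F monic, (F,f)=1} G_q(f,F) X^{deg F}` as a formal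
power series. -/
noncomputable def PsiTildeS (Fq : Type) [Field Fq] [Fintype Fq] (ζ : Fq) (p : ℕ)
    [Algebra (ZMod p) Fq] (f : Polynomial Fq) : PowerSeries ℂ :=
  PowerSeries.mk fun n => ∑ F ∈ Mdeg Fq n, if IsCoprime F f then Gq Fq ζ p f F else 0



section Aux
variable {Fq : Type} [Field Fq] [Fintype Fq]

lemma mem_residues {h f : Polynomial Fq} :
    f ∈ residues Fq h ↔ f.degree < (h.natDegree : ℕ) := by
  simp [residues, Set.Finite.mem_toFinset]

lemma mem_Mdeg {n : ℕ} {f : Polynomial Fq} :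
    f ∈ Mdeg Fq n ↔ f.Monic ∧ f.natDegree = n := by
  simp [Mdeg, Set.Finite.mem_toFinset]

lemma mem_MdegLE {n : ℕ} {f : Polynomial Fq} :
    f ∈ MdegLE Fq n ↔ f.Monic ∧ f.natDegree ≤ n := by
  simp [MdegLE, Set.Finite.mem_toFinset]

lemma sum_residues_decomp (h : Polynomial Fq) (hmon : h.Monic) (hd : 1 ≤ h.natDegree)
    (F : Polynomial Fq → ℂ) (hF0 : F 0 = 0) :
    ∑ a ∈ residues Fq h, F a
      = ∑ c : Fqˣ, ∑ f ∈ MdegLE Fq (h.natDegree - 1), F (Polynomial.C (c : Fq) * f) := by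
  set n := h.natDegree with hn
  have step1 : ∑ a ∈ residues Fq h, F a = ∑ a ∈ (residues Fq h).erase 0, F a :=
    (Finset.sum_erase _ hF0).symm
  have step2 : ∑ c : Fqˣ, ∑ f ∈ MdegLE Fq (n - 1), F (Polynomial.C (c : Fq) * f)
      = ∑ x ∈ (Finset.univ : Finset Fqˣ) ×ˢ MdegLE Fq (n - 1), F (Polynomial.C (x.1 : Fq) * x.2) := by
    rw [Finset.sum_product]
  rw [step1, step2]
  refine (Finset.sum_nbij' (fun a => if ha : a = 0 then ((1 : Fqˣ), (1 : Polynomial Fq))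
      else (Units.mk0 a.leadingCoeff (Polynomial.leadingCoeff_ne_zero.mpr ha),
        Polynomial.C a.leadingCoeff⁻¹ * a))
    (fun x => Polynomial.C (x.1 : Fq) * x.2) ?_ ?_ ?_ ?_ ?_)
  · -- maps erase into product
    intro a ha
    obtain ⟨ha0, har⟩ := Finset.mem_erase.mp ha
    rw [dif_neg ha0]
    have hlc : a.leadingCoeff ≠ 0 := Polynomial.leadingCoeff_ne_zero.mpr ha0
    refine Finset.mem_product.mpr ⟨Finset.mem_univ _, mem_MdegLE.mpr ⟨?_, ?_⟩⟩
    all_goals simp only [Prod.snd]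
    · unfold Polynomial.Monic
      rw [Polynomial.leadingCoeff_mul, Polynomial.leadingCoeff_C, inv_mul_cancel₀ hlc]
    · have hdeg : a.degree < (n : ℕ) := mem_residues.mp har
      have : a.natDegree < n := (Polynomial.natDegree_lt_iff_degree_lt ha0).mpr hdeg
      have h2 : (Polynomial.C a.leadingCoeff⁻¹ * a).natDegree ≤ a.natDegree :=
        Polynomial.natDegree_C_mul_le _ _
      omega
  · -- maps product into erase
    rintro ⟨c, f⟩ hx
    dsimp only
    obtain ⟨-, hf⟩ := Finset.mem_product.mp hx
    obtain ⟨hfm, hfd⟩ := mem_MdegLE.mp hf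
    have hfd' : f.natDegree ≤ n - 1 := hfd
    have hc0 : (c : Fq) ≠ 0 := c.ne_zero
    have hne : Polynomial.C (c : Fq) * f ≠ 0 :=
      mul_ne_zero (by simpa using hc0) hfm.ne_zero
    refine Finset.mem_erase.mpr ⟨hne, mem_residues.mpr ?_⟩
    rw [Polynomial.degree_C_mul hc0]
    have : f.natDegree < n := by omega
    exact (Polynomial.natDegree_lt_iff_degree_lt hfm.ne_zero).mp this
  · -- left inverse
    intro a ha
    obtain ⟨ha0, -⟩ := Finset.mem_erase.mp ha
    rw [dif_neg ha0]
    simp only [Prod.fst, Prod.snd, Units.val_mk0]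
    rw [← mul_assoc, ← Polynomial.C_mul,
      mul_inv_cancel₀ (Polynomial.leadingCoeff_ne_zero.mpr ha0), Polynomial.C_1, one_mul]
  · -- right inverse
    rintro ⟨c, f⟩ hx
    dsimp only
    obtain ⟨-, hf⟩ := Finset.mem_product.mp hx
    obtain ⟨hfm, -⟩ := mem_MdegLE.mp hf
    have hc0 : (c : Fq) ≠ 0 := c.ne_zero
    have hne : Polynomial.C (c : Fq) * f ≠ 0 :=
      mul_ne_zero (by simpa using hc0) hfm.ne_zero
    rw [dif_neg hne]
    have hlc : (Polynomial.C (c : Fq) * f).leadingCoeff = (c : Fq) := by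
      rw [Polynomial.leadingCoeff_mul, Polynomial.leadingCoeff_C, hfm.leadingCoeff, mul_one]
    ext
    · simp [hlc]
    · simp only [hlc, ← mul_assoc, ← Polynomial.C_mul, inv_mul_cancel₀ hc0,
        Polynomial.C_1, one_mul]
  · intro a ha
    obtain ⟨ha0, -⟩ := Finset.mem_erase.mp ha
    rw [dif_neg ha0]
    simp only [Prod.fst, Prod.snd, Units.val_mk0]
    rw [← mul_assoc, ← Polynomial.C_mul,
      mul_inv_cancel₀ (Polynomial.leadingCoeff_ne_zero.mpr ha0), Polynomial.C_1, one_mul]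

end Aux


section Aux2
variable {Fq : Type} [Field Fq] [Fintype Fq] {p : ℕ} [Fact p.Prime] [Algebra (ZMod p) Fq]

lemma cexp_mod (m : ℕ) (hp : p ≠ 0) :
    Complex.exp (2 * Real.pi * Complex.I * (m : ℂ) / p)
      = Complex.exp (2 * Real.pi * Complex.I * ((m % p : ℕ) : ℂ) / p) := by
  have hm : (m : ℂ) = ((m % p : ℕ) : ℂ) + ((m / p : ℕ) : ℂ) * p := by
    exact_mod_cast (Nat.mod_add_div' m p).symm
  have hone : Complex.exp (((m / p : ℕ) : ℂ) * (2 * Real.pi * Complex.I)) = 1 := by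
    have := Complex.exp_int_mul_two_pi_mul_I ((m / p : ℕ) : ℤ)
    push_cast at this
    exact this
  have hpc : (p : ℂ) ≠ 0 := Nat.cast_ne_zero.mpr hp
  have hsplit : 2 * Real.pi * Complex.I * (m : ℂ) / p
      = 2 * Real.pi * Complex.I * ((m % p : ℕ) : ℂ) / p
        + ((m / p : ℕ) : ℂ) * (2 * Real.pi * Complex.I) := by
    rw [hm]; field_simp
  rw [hsplit, Complex.exp_add, hone, mul_one]

lemma stdChar_zero : stdChar Fq p 0 = 1 := by
  simp [stdChar]

lemma stdChar_add (x y : Fq) :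
    stdChar Fq p (x + y) = stdChar Fq p x * stdChar Fq p y := by
  haveI : NeZero p := ⟨(Fact.out : p.Prime).ne_zero⟩
  unfold stdChar
  rw [← Complex.exp_add, map_add, ZMod.val_add,
    ← cexp_mod _ (Fact.out : p.Prime).ne_zero]
  congr 1
  push_cast
  ring

lemma exists_stdChar_ne_one : ∃ x : Fq, stdChar Fq p x ≠ 1 := by
  haveI : Module.Finite (ZMod p) Fq := Module.Finite.of_finite
  obtain ⟨x, hx⟩ := Algebra.trace_surjective (ZMod p) Fq 1
  refine ⟨x, ?_⟩
  unfold stdChar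
  haveI : NeZero p := ⟨(Fact.out : p.Prime).ne_zero⟩
  rw [hx, ZMod.val_one p]
  have hprim := Complex.isPrimitiveRoot_exp p (Fact.out : p.Prime).ne_zero
  have hne := hprim.ne_one (Fact.out : p.Prime).one_lt
  have : 2 * (Real.pi : ℂ) * Complex.I * ((1:ℕ) : ℂ) / p
      = 2 * (Real.pi : ℂ) * Complex.I / p := by norm_num
  rw [this]
  exact hne

lemma sum_stdChar_eq_zero : ∑ x : Fq, stdChar Fq p x = 0 := by
  obtain ⟨x₀, hx₀⟩ := exists_stdChar_ne_one (Fq := Fq) (p := p)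
  have h1 : ∑ x : Fq, stdChar Fq p x = ∑ x : Fq, stdChar Fq p (x₀ + x) :=
    (Fintype.sum_equiv (Equiv.addLeft x₀) _ _ (fun x => rfl)).symm
  have h2 : ∑ x : Fq, stdChar Fq p (x₀ + x) = stdChar Fq p x₀ * ∑ x : Fq, stdChar Fq p x := by
    rw [Finset.mul_sum]
    exact Finset.sum_congr rfl fun x _ => stdChar_add x₀ x
  have h := h1.trans h2
  have h3 : (stdChar Fq p x₀ - 1) * ∑ x : Fq, stdChar Fq p x = 0 := by
    rw [sub_mul, one_mul, ← h, sub_self]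
  rcases mul_eq_zero.mp h3 with h | h
  · exact absurd (sub_eq_zero.mp h) hx₀
  · exact h

lemma sum_units_stdChar : ∑ c : Fqˣ, stdChar Fq p (c : Fq) = -1 := by
  have h0 : ∑ x : Fq, stdChar Fq p x = 0 := sum_stdChar_eq_zero
  have h1 : stdChar Fq p 0 + ∑ x ∈ Finset.univ.erase (0 : Fq), stdChar Fq p x
      = ∑ x : Fq, stdChar Fq p x := Finset.add_sum_erase _ _ (Finset.mem_univ 0)
  have h2 : ∑ c : Fqˣ, stdChar Fq p (c : Fq)
      = ∑ x ∈ Finset.univ.erase (0 : Fq), stdChar Fq p x := by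
    refine Finset.sum_nbij' (fun c => (c : Fq))
      (fun x => if hx : x = 0 then 1 else Units.mk0 x hx) ?_ ?_ ?_ ?_ ?_
    · intro c _; exact Finset.mem_erase.mpr ⟨c.ne_zero, Finset.mem_univ _⟩
    · intro x _; exact Finset.mem_univ _
    · intro c _
      rw [dif_neg c.ne_zero]
      exact Units.ext rfl
    · intro x hx
      obtain ⟨hx0, -⟩ := Finset.mem_erase.mp hx
      rw [dif_neg hx0]
      rfl
    · intro c _; rfl
  rw [h2, stdChar_zero, h0] at *
  linear_combination h1

lemma sum_residues_char_eq_zero (χ : DChar Fq) (hprim : IsPrimitiveChar χ)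
    (hdeg : 1 ≤ χ.modulus.natDegree) :
    ∑ a ∈ residues Fq χ.modulus, χ.toFun a = 0 := by
  have hmon : χ.modulus.Monic := χ.monic_modulus
  have hdegh : χ.modulus.degree = (χ.modulus.natDegree : ℕ) :=
    Polynomial.degree_eq_natDegree hmon.ne_zero
  have hmem : ∀ x : Polynomial Fq, x %ₘ χ.modulus ∈ residues Fq χ.modulus := by
    intro x
    refine mem_residues.mpr ?_
    rw [← hdegh]
    exact Polynomial.degree_modByMonic_lt x hmon
  have hdvdmod : ∀ x : Polynomial Fq, χ.modulus ∣ x - x %ₘ χ.modulus := by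
    intro x
    refine ⟨x /ₘ χ.modulus, ?_⟩
    have := Polynomial.modByMonic_eq_sub_mul_div x χ.modulus
    rw [this]; ring
  have heq : ∀ a ∈ residues Fq χ.modulus, ∀ b ∈ residues Fq χ.modulus,
      χ.modulus ∣ a - b → a = b := by
    intro a ha b hb hdvd
    have hda : a.degree < (χ.modulus.natDegree : ℕ) := mem_residues.mp ha
    have hdb : b.degree < (χ.modulus.natDegree : ℕ) := mem_residues.mp hb
    have hd : (a - b).degree < χ.modulus.degree := by
      rw [hdegh]
      exact lt_of_le_of_lt (Polynomial.degree_sub_le a b) (max_lt hda hdb)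
    exact sub_eq_zero.mp (Polynomial.eq_zero_of_dvd_of_degree_lt hdvd hd)
  have hnp : ∃ a₀ : Polynomial Fq, IsCoprime a₀ χ.modulus ∧ χ.toFun a₀ ≠ 1 := by
    by_contra hcon
    push_neg at hcon
    have hper : IsPeriod χ 1 := by
      refine ⟨Polynomial.monic_one, fun a b hha hhb _ => ?_⟩
      rw [hcon a hha, hcon b hhb]
    have h2 := hprim 1 hper
    rw [Polynomial.natDegree_one] at h2
    omega
  obtain ⟨a₀, hcop, hne1⟩ := hnp
  obtain ⟨u, v, huv⟩ := hcop
  have key : ∑ a ∈ residues Fq χ.modulus, χ.toFun ((a₀ * a) %ₘ χ.modulus)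
      = ∑ a ∈ residues Fq χ.modulus, χ.toFun a := by
    refine Finset.sum_nbij' (fun a => (a₀ * a) %ₘ χ.modulus) (fun a => (u * a) %ₘ χ.modulus)
      (fun a _ => hmem _) (fun a _ => hmem _) ?_ ?_ (fun a _ => rfl)
    · intro a ha
      refine heq _ (hmem _) _ ha ?_
      set X := (a₀ * a) %ₘ χ.modulus with hX
      set Y := (u * X) %ₘ χ.modulus with hY
      have d1 : χ.modulus ∣ u * X - Y := hdvdmod (u * X)
      have d2 : χ.modulus ∣ a₀ * a - X := hdvdmod (a₀ * a)
      have d3 : χ.modulus ∣ u * (a₀ * a) - a := ⟨-(v * a), by linear_combination a * huv⟩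
      have hrw : Y - a = -(u * X - Y) + (-(u * (a₀ * a - X))) + (u * (a₀ * a) - a) := by ring
      rw [hrw]
      exact dvd_add (dvd_add (dvd_neg.mpr d1) (dvd_neg.mpr (d2.mul_left u))) d3
    · intro a ha
      refine heq _ (hmem _) _ ha ?_
      set X := (u * a) %ₘ χ.modulus with hX
      set Y := (a₀ * X) %ₘ χ.modulus with hY
      have d1 : χ.modulus ∣ a₀ * X - Y := hdvdmod (a₀ * X)
      have d2 : χ.modulus ∣ u * a - X := hdvdmod (u * a)
      have d3 : χ.modulus ∣ a₀ * (u * a) - a := ⟨-(v * a), by linear_combination a * huv⟩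
      have hrw : Y - a = -(a₀ * X - Y) + (-(a₀ * (u * a - X))) + (a₀ * (u * a) - a) := by ring
      rw [hrw]
      exact dvd_add (dvd_add (dvd_neg.mpr d1) (dvd_neg.mpr (d2.mul_left a₀))) d3
  have key2 : ∑ a ∈ residues Fq χ.modulus, χ.toFun ((a₀ * a) %ₘ χ.modulus)
      = χ.toFun a₀ * ∑ a ∈ residues Fq χ.modulus, χ.toFun a := by
    rw [Finset.mul_sum]
    refine Finset.sum_congr rfl fun a _ => ?_
    rw [χ.periodic _ _ (dvd_sub_comm.mp (hdvdmod (a₀ * a))), χ.map_mul]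
  have h3 : (χ.toFun a₀ - 1) * ∑ a ∈ residues Fq χ.modulus, χ.toFun a = 0 := by
    rw [sub_mul, one_mul, ← key2, key, sub_self]
  rcases mul_eq_zero.mp h3 with hc | hc
  · exact absurd (sub_eq_zero.mp hc) hne1
  · exact hc

end Aux2

/-- The Gauss sum `G(χ)` of a primitive Dirichlet character expressed through `τ(χ)` and
the top coefficient of the `L`-function. -/
theorem statement4 (Fq : Type) [Field Fq] [Fintype Fq]
    (hq : Odd (Fintype.card Fq))
    (p : ℕ) [Fact p.Prime] [Algebra (ZMod p) Fq] (hp : p = ringChar Fq)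
    (χ : DChar Fq) (hprim : IsPrimitiveChar χ) (hdeg : 1 ≤ χ.modulus.natDegree) :
    (IsOddChar χ →
      bigGauss Fq p χ = tauD Fq p χ * ∑ f ∈ Mdeg Fq (χ.modulus.natDegree - 1), χ.toFun f) ∧
    (IsEvenChar χ →
      bigGauss Fq p χ =
        -(Fintype.card Fq : ℂ) * ∑ f ∈ Mdeg Fq (χ.modulus.natDegree - 1), χ.toFun f) := by
  classical
  have hmon : χ.modulus.Monic := χ.monic_modulus
  set n := χ.modulus.natDegree with hn
  have hχ0 : χ.toFun 0 = 0 := by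
    rw [χ.eq_zero_iff]
    intro hcop
    have h1 : IsUnit χ.modulus := isCoprime_zero_left.mp hcop
    have h2 := Polynomial.natDegree_eq_zero_of_isUnit h1
    omega
  set SA := ∑ f ∈ Mdeg Fq (n - 1), χ.toFun f with hSA
  set SB := ∑ f ∈ (MdegLE Fq (n - 1)).filter (fun f => ¬ f.natDegree = n - 1), χ.toFun f with hSB
  have hfilter : (MdegLE Fq (n - 1)).filter (fun f => f.natDegree = n - 1) = Mdeg Fq (n - 1) := by
    ext f
    simp only [Finset.mem_filter, mem_MdegLE, mem_Mdeg]
    constructor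
    · rintro ⟨⟨h1, _⟩, h3⟩; exact ⟨h1, h3⟩
    · rintro ⟨h1, h2⟩; exact ⟨⟨h1, le_of_eq h2⟩, h2⟩
  have hLE : ∀ G : Polynomial Fq → ℂ, ∑ f ∈ MdegLE Fq (n - 1), G f
      = ∑ f ∈ Mdeg Fq (n - 1), G f
        + ∑ f ∈ (MdegLE Fq (n - 1)).filter (fun f => ¬ f.natDegree = n - 1), G f := by
    intro G
    rw [← Finset.sum_filter_add_sum_filter_not (MdegLE Fq (n - 1))
      (fun f => f.natDegree = n - 1), hfilter]
  have hcoeff1 : ∀ f ∈ Mdeg Fq (n - 1), f.coeff (n - 1) = 1 := by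
    intro f hf
    obtain ⟨h1, h2⟩ := mem_Mdeg.mp hf
    rw [← h2]
    exact h1.coeff_natDegree
  have hcoeff0 : ∀ f ∈ (MdegLE Fq (n - 1)).filter (fun f => ¬ f.natDegree = n - 1),
      f.coeff (n - 1) = 0 := by
    intro f hf
    obtain ⟨hf1, hf2⟩ := Finset.mem_filter.mp hf
    obtain ⟨h1, h2⟩ := mem_MdegLE.mp hf1
    exact Polynomial.coeff_eq_zero_of_natDegree_lt (lt_of_le_of_ne h2 hf2)
  -- each C c * f (with f ∈ MdegLE (n-1)) is its own residue
  have hmodself : ∀ (c : Fqˣ) (f : Polynomial Fq), f ∈ MdegLE Fq (n - 1) →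
      (Polynomial.C (c : Fq) * f) %ₘ χ.modulus = Polynomial.C (c : Fq) * f := by
    intro c f hf
    obtain ⟨hfm, hfd⟩ := mem_MdegLE.mp hf
    rw [Polynomial.modByMonic_eq_self_iff hmon,
      Polynomial.degree_eq_natDegree hmon.ne_zero,
      Polynomial.degree_C_mul c.ne_zero]
    have hlt : f.natDegree < n := by omega
    exact (Polynomial.natDegree_lt_iff_degree_lt hfm.ne_zero).mp hlt
  have hterm : ∀ (c : Fqˣ) (f : Polynomial Fq), f ∈ MdegLE Fq (n - 1) →
      χ.toFun (Polynomial.C (c : Fq) * f) * eqF Fq p (Polynomial.C (c : Fq) * f) χ.modulus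
        = χ.toFun (Polynomial.C (c : Fq)) * χ.toFun f
          * stdChar Fq p ((c : Fq) * f.coeff (n - 1)) := by
    intro c f hf
    rw [χ.map_mul]
    unfold eqF
    rw [hmodself c f hf, Polynomial.coeff_C_mul]
  have hG : bigGauss Fq p χ
      = ∑ c : Fqˣ, (χ.toFun (Polynomial.C (c : Fq))
          * (stdChar Fq p (c : Fq) * SA + SB)) := by
    unfold bigGauss
    rw [sum_residues_decomp χ.modulus hmon hdeg
      (fun a => χ.toFun a * eqF Fq p a χ.modulus) (by show χ.toFun 0 * _ = 0; rw [hχ0, zero_mul])]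
    refine Finset.sum_congr rfl fun c _ => ?_
    rw [hLE (fun f => χ.toFun (Polynomial.C (c : Fq) * f)
      * eqF Fq p (Polynomial.C (c : Fq) * f) χ.modulus)]
    have e1 : ∑ f ∈ Mdeg Fq (n - 1), χ.toFun (Polynomial.C (c : Fq) * f)
          * eqF Fq p (Polynomial.C (c : Fq) * f) χ.modulus
        = (χ.toFun (Polynomial.C (c : Fq)) * stdChar Fq p (c : Fq)) * SA := by
      rw [hSA, Finset.mul_sum]
      refine Finset.sum_congr rfl fun f hf => ?_
      have hfLE : f ∈ MdegLE Fq (n - 1) := by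
        obtain ⟨h1, h2⟩ := mem_Mdeg.mp hf
        exact mem_MdegLE.mpr ⟨h1, le_of_eq h2⟩
      rw [hterm c f hfLE, hcoeff1 f hf, mul_one]
      ring
    have e2 : ∑ f ∈ (MdegLE Fq (n - 1)).filter (fun f => ¬ f.natDegree = n - 1),
          χ.toFun (Polynomial.C (c : Fq) * f)
            * eqF Fq p (Polynomial.C (c : Fq) * f) χ.modulus
        = χ.toFun (Polynomial.C (c : Fq)) * SB := by
      rw [hSB, Finset.mul_sum]
      refine Finset.sum_congr rfl fun f hf => ?_
      have hfLE : f ∈ MdegLE Fq (n - 1) := (Finset.mem_filter.mp hf).1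
      rw [hterm c f hfLE, hcoeff0 f hf, mul_zero, stdChar_zero, mul_one]
    rw [e1, e2]
    ring
  have hG' : bigGauss Fq p χ
      = tauD Fq p χ * SA + (∑ c : Fqˣ, χ.toFun (Polynomial.C (c : Fq))) * SB := by
    rw [hG]
    unfold tauD
    rw [Finset.sum_mul, Finset.sum_mul, ← Finset.sum_add_distrib]
    refine Finset.sum_congr rfl fun c _ => ?_
    ring
  have horto : (∑ c : Fqˣ, χ.toFun (Polynomial.C (c : Fq))) * (SA + SB) = 0 := by
    have h0 := sum_residues_char_eq_zero χ hprim hdeg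
    rw [sum_residues_decomp χ.modulus hmon hdeg χ.toFun hχ0] at h0
    rw [Finset.sum_mul]
    rw [← h0]
    refine Finset.sum_congr rfl fun c _ => ?_
    rw [hLE (fun f => χ.toFun (Polynomial.C (c : Fq) * f))]
    rw [hSA, hSB, mul_add, Finset.mul_sum, Finset.mul_sum]
    congr 1
    · exact Finset.sum_congr rfl fun f _ => (χ.map_mul _ _).symm
    · exact Finset.sum_congr rfl fun f _ => (χ.map_mul _ _).symm
  constructor
  · -- odd case
    intro hodd
    have hU : (∑ c : Fqˣ, χ.toFun (Polynomial.C (c : Fq))) = 0 := by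
      rw [IsOddChar, IsEvenChar] at hodd
      push_neg at hodd
      obtain ⟨c₀, hc₀ne, hc₀⟩ := hodd
      set u₀ : Fqˣ := Units.mk0 c₀ hc₀ne with hu₀
      have hre : ∑ c : Fqˣ, χ.toFun (Polynomial.C ((u₀ * c : Fqˣ) : Fq))
          = ∑ c : Fqˣ, χ.toFun (Polynomial.C (c : Fq)) :=
        Fintype.sum_equiv (Equiv.mulLeft u₀) _ _ (fun c => rfl)
      have hre2 : ∑ c : Fqˣ, χ.toFun (Polynomial.C ((u₀ * c : Fqˣ) : Fq))
          = χ.toFun (Polynomial.C c₀) * ∑ c : Fqˣ, χ.toFun (Polynomial.C (c : Fq)) := by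
        rw [Finset.mul_sum]
        refine Finset.sum_congr rfl fun c _ => ?_
        rw [Units.val_mul, hu₀]
        show χ.toFun (Polynomial.C (c₀ * (c : Fq))) = _
        rw [map_mul Polynomial.C, χ.map_mul]
      have h3 : (χ.toFun (Polynomial.C c₀) - 1)
          * ∑ c : Fqˣ, χ.toFun (Polynomial.C (c : Fq)) = 0 := by
        rw [sub_mul, one_mul, ← hre2, hre, sub_self]
      rcases mul_eq_zero.mp h3 with hc | hc
      · exact absurd (sub_eq_zero.mp hc) hc₀
      · exact hc
    rw [hG', hU, zero_mul, add_zero]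
  · -- even case
    intro heven
    have hcard : 1 < Fintype.card Fq := Fintype.one_lt_card
    have hU : (∑ c : Fqˣ, χ.toFun (Polynomial.C (c : Fq))) = (Fintype.card Fq : ℂ) - 1 := by
      have e1 : (∑ c : Fqˣ, χ.toFun (Polynomial.C (c : Fq))) = ∑ _c : Fqˣ, (1 : ℂ) :=
        Finset.sum_congr rfl (fun c _ => heven (c : Fq) (Units.ne_zero c))
      rw [e1, Finset.sum_const, Finset.card_univ, Fintype.card_units, nsmul_eq_mul, mul_one]
      rw [Nat.cast_sub (le_of_lt hcard), Nat.cast_one]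
    have htau : tauD Fq p χ = -1 := by
      unfold tauD
      have e1 : (∑ c : Fqˣ, χ.toFun (Polynomial.C (c : Fq)) * stdChar Fq p (c : Fq))
          = ∑ c : Fqˣ, stdChar Fq p (c : Fq) :=
        Finset.sum_congr rfl (fun c _ => by rw [heven (c : Fq) (Units.ne_zero c), one_mul])
      rw [e1]
      exact sum_units_stdChar
    have hUne : (∑ c : Fqˣ, χ.toFun (Polynomial.C (c : Fq))) ≠ 0 := by
      rw [hU]
      intro hcon
      have : (Fintype.card Fq : ℂ) = 1 := by linear_combination hcon
      have h2 : (Fintype.card Fq : ℕ) = 1 := by exact_mod_cast this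
      omega
    have hSBA : SB = -SA := by
      rcases mul_eq_zero.mp horto with hc | hc
      · exact absurd hc hUne
      · linear_combination hc
    rw [hG', htau, hU, hSBA]
    ring


end CubicLF
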